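/- Let ψ_min be a real with 0 ≤ ψ_min < ψ_A, and set η = ((N_B^T/k_B)·π_B·(ψ_B−ψ_min)) / ((N_A^T/k_A)·π_A·(ψ_A−ψ_min) + (N_B^T/k_B)·π_B·(ψ_B−ψ_min)). Then D(ψ_min) > 0 if and only if (1−η)·q_A·((k_A−1)/k_A)·((1+ψ_min)/(1+ψ_A)) + η·q_B·((k_B−1)/k_B)·((1+ψ_min)/(1+ψ_B)) > 1. (Endpoint characterization at ψ⋆ = ψ_min, used in the proof of Theorem 1 for the case w^d < w_ct.) -/

import Mathlib

/-- For `0 ≤ ψ_min < ψ_A`, `D(ψ_min) > 0` iff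
`(1−η)q_A((k_A−1)/k_A)((1+ψ_min)/(1+ψ_A)) + ηq_B((k_B−1)/k_B)((1+ψ_min)/(1+ψ_B)) > 1`
(endpoint characterization at `ψ⋆ = ψ_min`). -/
theorem D_pos_at_psimin_iff
    (NAT NBT πA πB qA qB ψA ψB : ℝ)
    (kA kB : ℕ) (hkA : 2 ≤ kA) (hkB : 2 ≤ kB)
    (hNAT : 0 < NAT) (hNBT : 0 < NBT) (hπA : 0 < πA) (hπB : 0 < πB)
    (hqA : 0 < qA) (hqB : 0 < qB)
    (hψA : 0 < ψA) (hAB : ψA ≤ ψB)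
    (D : ℝ → ℝ)
    (hD : ∀ ψs : ℝ, D ψs =
      ((NAT / (kA : ℝ)) * (1 - ((kA : ℝ) - 1) / (kA : ℝ) * qA * ((ψs - ψA) / (1 + ψA))) *
          ((1 + ψs) * πA) -
        (NAT / (kA : ℝ)) * ((1 + ψA) * πA)) +
      ((NBT / (kB : ℝ)) * (1 - ((kB : ℝ) - 1) / (kB : ℝ) * qB * ((ψs - ψB) / (1 + ψB))) *
          ((1 + ψs) * πB) -
        (NBT / (kB : ℝ)) * ((1 + ψB) * πB)))
    (ψmin : ℝ) (hψmin0 : 0 ≤ ψmin) (hψminA : ψmin < ψA)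
    (η : ℝ)
    (hη : η = ((NBT / (kB : ℝ)) * πB * (ψB - ψmin)) /
      ((NAT / (kA : ℝ)) * πA * (ψA - ψmin) + (NBT / (kB : ℝ)) * πB * (ψB - ψmin))) :
    D ψmin > 0 ↔
      (1 - η) * qA * (((kA : ℝ) - 1) / (kA : ℝ)) * ((1 + ψmin) / (1 + ψA)) +
        η * qB * (((kB : ℝ) - 1) / (kB : ℝ)) * ((1 + ψmin) / (1 + ψB)) > 1 := by
  have hkA0 : (0:ℝ) < (kA:ℝ) := by
    have : 0 < kA := lt_of_lt_of_le (by norm_num) hkA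
    exact_mod_cast this
  have hkB0 : (0:ℝ) < (kB:ℝ) := by
    have : 0 < kB := lt_of_lt_of_le (by norm_num) hkB
    exact_mod_cast this
  have h1A : (0:ℝ) < 1 + ψA := by linarith
  have h1B : (0:ℝ) < 1 + ψB := by linarith
  set a : ℝ := (NAT / (kA : ℝ)) * πA * (ψA - ψmin) with ha_def
  set b : ℝ := (NBT / (kB : ℝ)) * πB * (ψB - ψmin) with hb_def
  have ha : 0 < a := by
    have h : 0 < ψA - ψmin := by linarith
    rw [ha_def]; positivity
  have hb : 0 < b := by
    have h : 0 < ψB - ψmin := by linarith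
    rw [hb_def]; positivity
  have hs : 0 < a + b := by linarith
  set XA : ℝ := qA * (((kA : ℝ) - 1) / (kA : ℝ)) * ((1 + ψmin) / (1 + ψA)) with hXA
  set XB : ℝ := qB * (((kB : ℝ) - 1) / (kB : ℝ)) * ((1 + ψmin) / (1 + ψB)) with hXB
  have hDval : D ψmin = a * XA + b * XB - (a + b) := by
    rw [hD, ha_def, hb_def, hXA, hXB]
    field_simp
    ring
  have hη' : η = b / (a + b) := hη
  have h1η : 1 - η = a / (a + b) := by
    rw [hη']
    field_simp
    ring
  have hrhs : (1 - η) * qA * (((kA : ℝ) - 1) / (kA : ℝ)) * ((1 + ψmin) / (1 + ψA)) +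
      η * qB * (((kB : ℝ) - 1) / (kB : ℝ)) * ((1 + ψmin) / (1 + ψB))
      = (a * XA + b * XB) / (a + b) := by
    rw [h1η, hη', hXA, hXB]
    field_simp
  rw [hDval, hrhs, gt_iff_lt, gt_iff_lt, sub_pos, lt_div_iff₀ hs, one_mul]
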